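/- arXiv:math/0308228 — 2 statements merged into one kernel-verified Lean document; each statement's English description precedes it below -/
import Mathlib

section
/- Let ~H and ~V be equivalence relations on a set P such that the composite relation ~D (p ~D q iff ∃ r, p ~H r and r ~V q) is an equivalence relation, and such that for all r, s ∈ P, if r ~H s and r ~V s then r = s. Then for every p, r, q ∈ P with p ~H r and r ~V q, there exists a unique v ∈ P with p ~V v and v ~H q. -/
/-- vacancy for double equivalence relations.  If the composite
relation `~D` is an equivalence relation and `r ~H s ∧ r ~V s → r = s`, then for
`p ~H r ~V q` there is a unique `v` with `p ~V v ~H q`. -/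
theorem vacant_double_equivalence (P : Type*) (rH rV : P → P → Prop)
    (hH : Equivalence rH) (hV : Equivalence rV)
    (hD : Equivalence (fun p q : P => ∃ r, rH p r ∧ rV r q))
    (hvac : ∀ r s : P, rH r s → rV r s → r = s) :
    ∀ p r q : P, rH p r → rV r q → ∃! v : P, rV p v ∧ rH v q := by
  intro p r q hpr hrq
  obtain ⟨s, hqs, hsp⟩ := hD.symm ⟨r, hpr, hrq⟩
  refine ⟨s, ⟨hV.symm hsp, hH.symm hqs⟩, ?_⟩
  intro v ⟨hpv, hvq⟩
  exact hvac v s (hH.trans hvq hqs) (hV.trans (hV.symm hpv) (hV.symm hsp))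
end

section
/- Let F, G be a matched pair of finite groups and k a field. On the vector space with basis G × F, define a comultiplication Δ(e_s ⊗ x) = Σ_{uv = s} (e_u ⊗ (v ▷ x)) ⊗ (e_v ⊗ x) and counit ε(e_s ⊗ x) = δ_{s,1}. Then (Δ, ε) makes this space into a coassociative counital coalgebra. -/
/-- The comultiplication `Δ(e_s ⊗ x) = Σ_{uv = s} (e_u ⊗ (v ▷ x)) ⊗ (e_v ⊗ x)` on
the vector space with basis `G × F`, identified with functions `G × F → k`; a tensor
`Δ f` is identified with a function of two variables. -/
def bismashComul (k : Type) [Field k] (F G : Type) [Group F] [Group G]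
    [DecidableEq F] (tri : G → F → F) (f : G × F → k) :
    G × F → G × F → k :=
  fun p q => if p.2 = tri q.1 q.2 then f (p.1 * q.1, q.2) else 0

/-- for a matched pair of finite groups, the comultiplication
`Δ(e_s ⊗ x) = Σ_{uv = s}(e_u ⊗ (v ▷ x)) ⊗ (e_v ⊗ x)` and counit
`ε(e_s ⊗ x) = δ_{s,1}` make `k(G × F)` a coassociative counital coalgebra.
Coassociativity and the counit laws are expressed on coefficient functions;
`(ε ⊗ id)(Δ f)` is the function `p ↦ Σ_x Δf((1,x), p)`, and similarly on the
other side. -/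
theorem bismash_coalgebra (k : Type) [Field k] (F G : Type)
    [Group F] [Group G] [Fintype F] [Fintype G] [DecidableEq F] [DecidableEq G]
    (tri : G → F → F) (trl : G → F → G)
    (htri_one : ∀ x : F, tri 1 x = x)
    (htri_mul : ∀ (s t : G) (x : F), tri (s * t) x = tri s (tri t x))
    (htrl_one : ∀ s : G, trl s 1 = s)
    (htrl_mul : ∀ (s : G) (x y : F), trl s (x * y) = trl (trl s x) y)
    (hcomp1 : ∀ (s : G) (x y : F), tri s (x * y) = tri s x * tri (trl s x) y)
    (hcomp2 : ∀ (s t : G) (x : F), trl (s * t) x = trl s (tri t x) * trl t x)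
    (htri1 : ∀ s : G, tri s 1 = 1)
    (htrl1 : ∀ x : F, trl 1 x = 1) :
    (∀ (f : G × F → k) (p q r : G × F),
      bismashComul k F G tri (fun y => bismashComul k F G tri f y r) p q
        = bismashComul k F G tri (fun y => bismashComul k F G tri f p y) q r) ∧
    (∀ (f : G × F → k) (p : G × F),
      (∑ x : F, bismashComul k F G tri f (1, x) p) = f p ∧
      (∑ x : F, bismashComul k F G tri f p (1, x)) = f p) := by
  constructor
  · intro f p q r
    simp only [bismashComul, htri_mul, mul_assoc]
    by_cases h : q.2 = tri r.1 r.2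
    · simp [h]
    · simp [h]
  · intro f p
    constructor
    · have : (∑ x : F, bismashComul k F G tri f (1, x) p)
          = ∑ x : F, if x = tri p.1 p.2 then f (p.1, p.2) else 0 := by
        apply Finset.sum_congr rfl
        intro x _
        simp [bismashComul]
      rw [this, Finset.sum_ite_eq' Finset.univ (tri p.1 p.2) (fun _ => f (p.1, p.2))]
      simp
    · have : (∑ x : F, bismashComul k F G tri f p (1, x))
          = ∑ x : F, if p.2 = x then f (p.1, x) else 0 := by
        apply Finset.sum_congr rfl
        intro x _
        simp [bismashComul, htri_one]
      rw [this, Finset.sum_ite_eq Finset.univ p.2 (fun x => f (p.1, x))]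
      simp
end
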